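/- For n ≥ 4, let L ⊂ ℝⁿ be the lattice generated by the vector ½(e₁ + ⋯ + eₙ) together with e₂, …, eₙ. Then L contains ℤⁿ as a sublattice of index 2, every nonzero v ∈ L satisfies v₁² + ⋯ + vₙ² ≥ 1, and if n > 4 then the nonzero vectors of L of minimal squared length 1 are exactly the 2n vectors ±e₁, …, ±eₙ. -/

import Mathlib

private lemma half_ne_int (r s : ℤ) : (s : ℝ) + 1/2 ≠ (r : ℝ) := by
  intro h
  have h2 : ((2*s+1 : ℤ) : ℝ) = ((2*r : ℤ) : ℝ) := by push_cast; linarith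
  have h3 : (2*s+1 : ℤ) = 2*r := by exact_mod_cast h2
  omega

private lemma mem_Zn_iff {n : ℕ} (v : Fin n → ℝ) :
    v ∈ Submodule.span ℤ (Set.range fun i : Fin n => (Pi.single i 1 : Fin n → ℝ)) ↔
      ∀ i, ∃ k : ℤ, v i = k := by
  constructor
  · intro h
    induction h using Submodule.span_induction with
    | mem x hx =>
      obtain ⟨i, rfl⟩ := hx
      intro j
      exact ⟨if j = i then 1 else 0, by rcases eq_or_ne j i with h|h <;> simp [Pi.single_apply, h]⟩
    | zero => intro j; exact ⟨0, by simp⟩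
    | add x y _ _ hx hy =>
      intro j
      obtain ⟨a, ha⟩ := hx j; obtain ⟨b, hb⟩ := hy j
      exact ⟨a + b, by simp [ha, hb]⟩
    | smul m x _ hx =>
      intro j
      obtain ⟨a, ha⟩ := hx j
      exact ⟨m * a, by simp [ha]⟩
  · intro h
    choose k hk using h
    have hv : v = ∑ i, (k i : ℤ) • (Pi.single i (1:ℝ) : Fin n → ℝ) := by
      funext j
      rw [Finset.sum_apply]
      simp [Pi.single_apply, hk]
    rw [hv]
    exact Submodule.sum_mem _ fun i _ =>
      Submodule.smul_mem _ _ (Submodule.subset_span ⟨i, rfl⟩)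

private lemma mem_L_iff {n : ℕ} [NeZero n] (v : Fin n → ℝ) :
    v ∈ Submodule.span ℤ
        ({fun _ => (1 : ℝ) / 2} ∪
          {w : Fin n → ℝ | ∃ i : Fin n, i.val ≠ 0 ∧ w = Pi.single i 1}) ↔
      ∃ a : ℤ, ∀ i, ∃ k : ℤ, v i = a / 2 + k := by
  constructor
  · intro h
    induction h using Submodule.span_induction with
    | mem x hx =>
      rcases hx with hx | ⟨i, hi, rfl⟩
      · refine ⟨1, fun j => ⟨0, ?_⟩⟩
        rw [Set.mem_singleton_iff] at hx
        rw [hx]; norm_num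
      · refine ⟨0, fun j => ⟨if j = i then 1 else 0, ?_⟩⟩
        rcases eq_or_ne j i with h|h <;> simp [Pi.single_apply, h]
    | zero => exact ⟨0, fun j => ⟨0, by simp⟩⟩
    | add x y _ _ hx hy =>
      obtain ⟨a, ha⟩ := hx; obtain ⟨b, hb⟩ := hy
      refine ⟨a + b, fun j => ?_⟩
      obtain ⟨p, hp⟩ := ha j; obtain ⟨q, hq⟩ := hb j
      refine ⟨p + q, ?_⟩
      have : (x + y) j = x j + y j := rfl
      rw [this, hp, hq]; push_cast; ring
    | smul m x _ hx =>
      obtain ⟨a, ha⟩ := hx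
      refine ⟨m * a, fun j => ?_⟩
      obtain ⟨p, hp⟩ := ha j
      refine ⟨m * p, ?_⟩
      have : (m • x) j = (m : ℝ) * x j := by simp
      rw [this, hp]; push_cast; ring
  · rintro ⟨a, ha⟩
    choose k hk using ha
    have h0 : v = (a + 2 * k 0) • ((fun _ => (1:ℝ)/2) : Fin n → ℝ) +
        ∑ i ∈ Finset.univ.erase 0, ((k i - k 0 : ℤ)) • (Pi.single i (1:ℝ) : Fin n → ℝ) := by
      funext j
      have hs : (∑ i ∈ Finset.univ.erase 0,
          ((k i - k 0 : ℤ)) • (Pi.single i (1:ℝ) : Fin n → ℝ)) j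
          = if j = 0 then 0 else ((k j : ℝ) - k 0) := by
        rw [Finset.sum_apply]
        rcases eq_or_ne j 0 with rfl | hj
        · rw [if_pos rfl]
          apply Finset.sum_eq_zero
          intro i hi
          have hi0 : i ≠ 0 := (Finset.mem_erase.mp hi).1
          simp [Pi.single_apply, Ne.symm hi0]
        · rw [if_neg hj, Finset.sum_eq_single j]
          · simp
          · intro b _ hb
            simp [Pi.single_apply, Ne.symm hb]
          · intro h
            exact absurd (Finset.mem_erase.mpr ⟨hj, Finset.mem_univ j⟩) h
      rw [Pi.add_apply, hs, hk j]
      have hcoef : (((a + 2 * k 0) • fun _ => (1:ℝ)/2) : Fin n → ℝ) j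
          = ((a:ℝ) + 2 * (k 0 : ℝ)) * (1/2) := by
        simp only [Pi.smul_apply, zsmul_eq_mul]
        push_cast
        ring
      rw [hcoef]
      rcases eq_or_ne j 0 with rfl | hj
      · rw [if_pos rfl]; ring
      · rw [if_neg hj]; ring
    rw [h0]
    apply Submodule.add_mem
    · exact Submodule.smul_mem _ _ (Submodule.subset_span (Set.mem_union_left _ rfl))
    · apply Submodule.sum_mem
      intro i hi
      refine Submodule.smul_mem _ _ (Submodule.subset_span (Set.mem_union_right _ ⟨i, ?_, rfl⟩))
      have := (Finset.mem_erase.mp hi).1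
      exact fun h => this (Fin.ext (by rw [h]; simp))

private lemma key_lemma {n : ℕ} [NeZero n] (v : Fin n → ℝ)
    (hv : v ∈ Submodule.span ℤ
        ({fun _ => (1 : ℝ) / 2} ∪
          {w : Fin n → ℝ | ∃ i : Fin n, i.val ≠ 0 ∧ w = Pi.single i 1})) :
    (∀ i, ∃ k : ℤ, v i = k) ∨ (∀ i, ∃ k : ℤ, v i = k + 1/2) := by
  obtain ⟨a, ha⟩ := (mem_L_iff v).1 hv
  rcases Int.even_or_odd a with ⟨m, hm⟩ | ⟨m, hm⟩
  · left; intro i; obtain ⟨p, hp⟩ := ha i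
    exact ⟨m + p, by rw [hp, hm]; push_cast; ring⟩
  · right; intro i; obtain ⟨p, hp⟩ := ha i
    exact ⟨m + p, by rw [hp, hm]; push_cast; ring⟩

private lemma sq_int_ge {k : ℤ} (hk : k ≠ 0) : (1:ℝ) ≤ (k:ℝ)^2 := by
  have : 1 ≤ k^2 := by rcases hk.lt_or_gt with h|h <;> nlinarith
  exact_mod_cast this

private lemma sq_half_ge (k : ℤ) : (1:ℝ)/4 ≤ ((k:ℝ) + 1/2)^2 := by
  have h : (1:ℤ) ≤ (2*k+1)^2 := by rcases le_or_gt 0 k with h|h <;> nlinarith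
  have h' : (1:ℝ) ≤ ((2*k+1 : ℤ):ℝ)^2 := by exact_mod_cast h
  push_cast at h'
  nlinarith

theorem FS_dual_lattice_minimal_vectors (n : ℕ) (hn : 4 ≤ n)
    (L : Submodule ℤ (Fin n → ℝ))
    (hL : L = Submodule.span ℤ
        ({fun _ => (1 : ℝ) / 2} ∪
          {v : Fin n → ℝ | ∃ i : Fin n, i.val ≠ 0 ∧ v = Pi.single i 1}))
    (Zn : Submodule ℤ (Fin n → ℝ))
    (hZn : Zn = Submodule.span ℤ (Set.range fun i : Fin n => (Pi.single i 1 : Fin n → ℝ))) :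
    Zn ≤ L ∧
    Zn.toAddSubgroup.relIndex L.toAddSubgroup = 2 ∧
    (∀ v ∈ L, v ≠ 0 → 1 ≤ ∑ i, v i ^ 2) ∧
    (4 < n →
      {v : Fin n → ℝ | v ∈ L ∧ ∑ i, v i ^ 2 = 1} =
        {v | ∃ i : Fin n, v = Pi.single i 1 ∨ v = -Pi.single i 1}) := by
  haveI : NeZero n := ⟨by omega⟩
  have hmemL : ∀ v : Fin n → ℝ, v ∈ L ↔ ∃ a : ℤ, ∀ i, ∃ k : ℤ, v i = a / 2 + k := by
    intro v; rw [hL]; exact mem_L_iff v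
  have hmemZ : ∀ v : Fin n → ℝ, v ∈ Zn ↔ ∀ i, ∃ k : ℤ, v i = k := by
    intro v; rw [hZn]; exact mem_Zn_iff v
  have hkey : ∀ v ∈ L, (∀ i, ∃ k : ℤ, v i = k) ∨ (∀ i, ∃ k : ℤ, v i = k + 1/2) := by
    intro v hv; rw [hL] at hv; exact key_lemma v hv
  have hZL : Zn ≤ L := by
    intro x hx
    rw [hmemZ] at hx
    rw [hmemL]
    refine ⟨0, fun j => ?_⟩
    obtain ⟨t, ht⟩ := hx j
    exact ⟨t, by rw [ht]; norm_num⟩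
  have hsingle : ∀ i : Fin n, (Pi.single i 1 : Fin n → ℝ) ∈ L := by
    intro i
    apply hZL
    rw [hZn]
    exact Submodule.subset_span ⟨i, rfl⟩
  have hcL : ((fun _ => (1:ℝ)/2) : Fin n → ℝ) ∈ L := by
    rw [hL]; exact Submodule.subset_span (Set.mem_union_left _ rfl)
  -- minimum norm bound, lower bound in the half-integer case
  have hhalfbound : ∀ v : Fin n → ℝ, (∀ i, ∃ k : ℤ, v i = k + 1/2) →
      (n : ℝ) * (1/4) ≤ ∑ i, v i ^ 2 := by
    intro v hv
    have : (Finset.univ : Finset (Fin n)).card • ((1:ℝ)/4) ≤ ∑ i, v i ^ 2 := by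
      apply Finset.card_nsmul_le_sum
      intro i _
      obtain ⟨k, hk⟩ := hv i
      rw [hk]
      exact sq_half_ge k
    simpa [nsmul_eq_mul] using this
  refine ⟨hZL, ?_, ?_, ?_⟩
  · -- index 2
    rw [AddSubgroup.relIndex, AddSubgroup.index_eq_two_iff]
    refine ⟨⟨fun _ => (1:ℝ)/2, hcL⟩, ?_⟩
    rintro ⟨b, hb⟩
    rcases hkey b hb with hint | hhalf
    · refine Or.inr ⟨?_, ?_⟩
      · simp only [AddSubgroup.mem_addSubgroupOf, Submodule.mem_toAddSubgroup]
        exact (hmemZ b).2 hint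
      · simp only [AddSubgroup.mem_addSubgroupOf, Submodule.mem_toAddSubgroup]
        intro hmem
        rw [hmemZ] at hmem
        obtain ⟨r, hr⟩ := hmem 0
        obtain ⟨s, hs⟩ := hint 0
        have : b 0 + 1/2 = (r : ℝ) := hr
        rw [hs] at this
        exact half_ne_int r s this
    · refine Or.inl ⟨?_, ?_⟩
      · simp only [AddSubgroup.mem_addSubgroupOf, Submodule.mem_toAddSubgroup]
        rw [hmemZ]
        intro i
        obtain ⟨k, hk⟩ := hhalf i
        refine ⟨k + 1, ?_⟩
        show b i + 1/2 = ((k + 1 : ℤ) : ℝ)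
        rw [hk]; push_cast; ring
      · simp only [AddSubgroup.mem_addSubgroupOf, Submodule.mem_toAddSubgroup]
        intro hmem
        rw [hmemZ] at hmem
        obtain ⟨r, hr⟩ := hmem 0
        obtain ⟨s, hs⟩ := hhalf 0
        rw [hs] at hr
        exact half_ne_int r s hr
  · -- norm lower bound
    intro v hv hv0
    rcases hkey v hv with hint | hhalf
    · obtain ⟨j, hj⟩ := Function.ne_iff.mp hv0
      have hj0 : v j ≠ 0 := by simpa using hj
      obtain ⟨k, hk⟩ := hint j
      have hk0 : k ≠ 0 := by rintro rfl; simp [hk] at hj0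
      have h1 : (1:ℝ) ≤ v j ^ 2 := by rw [hk]; exact sq_int_ge hk0
      calc (1:ℝ) ≤ v j ^ 2 := h1
        _ ≤ ∑ i, v i ^ 2 :=
          Finset.single_le_sum (fun i _ => sq_nonneg (v i)) (Finset.mem_univ j)
    · have := hhalfbound v hhalf
      have hn' : (4:ℝ) ≤ n := by exact_mod_cast hn
      linarith
  · -- minimal vectors for n > 4
    intro h5
    ext v
    simp only [Set.mem_setOf_eq]
    constructor
    · rintro ⟨hvL, hsum⟩
      rcases hkey v hvL with hint | hhalf
      · obtain ⟨j, hj0⟩ : ∃ j, v j ≠ 0 := by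
          by_contra h
          push_neg at h
          simp [h] at hsum
        obtain ⟨k, hk⟩ := hint j
        have hk0 : k ≠ 0 := by rintro rfl; simp [hk] at hj0
        have h1 : (1:ℝ) ≤ v j ^ 2 := by rw [hk]; exact sq_int_ge hk0
        have hle : v j ^ 2 ≤ 1 := by
          rw [← hsum]
          exact Finset.single_le_sum (fun i _ => sq_nonneg (v i)) (Finset.mem_univ j)
        have hsq : v j ^ 2 = 1 := le_antisymm hle h1
        have hrest : ∀ i, i ≠ j → v i = 0 := by
          have hz : ∑ i ∈ Finset.univ.erase j, v i ^ 2 = 0 := by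
            have h' : v j ^ 2 + ∑ i ∈ Finset.univ.erase j, v i ^ 2 = ∑ i, v i ^ 2 :=
              Finset.add_sum_erase _ (fun i => v i ^ 2) (Finset.mem_univ j)
            linarith
          intro i hi
          have := (Finset.sum_eq_zero_iff_of_nonneg
            (fun i _ => sq_nonneg (v i))).1 hz i (Finset.mem_erase.mpr ⟨hi, Finset.mem_univ i⟩)
          exact pow_eq_zero_iff (two_ne_zero) |>.1 this
        have hvj : v j = 1 ∨ v j = -1 := by
          have : (v j - 1) * (v j + 1) = 0 := by nlinarith
          rcases mul_eq_zero.1 this with h|h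
          · left; linarith
          · right; linarith
        refine ⟨j, ?_⟩
        rcases hvj with h|h
        · left
          funext i
          rcases eq_or_ne i j with rfl|hi
          · simp [h]
          · rw [hrest i hi, Pi.single_eq_of_ne hi]
        · right
          funext i
          rcases eq_or_ne i j with rfl|hi
          · simp [h]
          · rw [hrest i hi]
            simp [Pi.single_eq_of_ne hi]
      · exfalso
        have := hhalfbound v hhalf
        have hn' : (5:ℝ) ≤ n := by exact_mod_cast h5
        rw [hsum] at this
        linarith
    · rintro ⟨i, rfl | rfl⟩
      · refine ⟨hsingle i, ?_⟩
        have : ∀ j, ((Pi.single i 1 : Fin n → ℝ) j) ^ 2 = (Pi.single i 1 : Fin n → ℝ) j := by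
          intro j
          rcases eq_or_ne j i with rfl|h
          · simp
          · simp [Pi.single_eq_of_ne h]
        rw [Finset.sum_congr rfl fun j _ => this j]
        simp [Pi.single_apply]
      · refine ⟨Submodule.neg_mem _ (hsingle i), ?_⟩
        have : ∀ j, ((-Pi.single i 1 : Fin n → ℝ) j) ^ 2 = (Pi.single i 1 : Fin n → ℝ) j := by
          intro j
          rcases eq_or_ne j i with rfl|h
          · simp
          · simp [Pi.single_eq_of_ne h]
        rw [Finset.sum_congr rfl fun j _ => this j]
        simp [Pi.single_apply]
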